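/- arXiv:2412.17914 — 3 statements merged into one kernel-verified Lean document; each statement's English description precedes it below -/
import Mathlib

section
/- Given a crossed module of Lie algebras μ: h → g, the 2-cochain c((h,g),(h',g')) = (0, μ([h,h'])) on the semi-direct product h⋊g (h viewed as abelian g-module) is a 2-cocycle with adjoint values. -/
section

variable {h g : Type*} [LieRing h] [LieAlgebra ℂ h] [LieRing g] [LieAlgebra ℂ g]
  [LieRingModule g h] [LieModule ℂ g h]

/-- The bracket of the semi-direct product `h ⋊ g` (`h` viewed as abelian `g`-module). -/
def semidirectBracket (x y : h × g) : h × g :=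
  (⁅x.2, y.1⁆ - ⁅y.2, x.1⁆, ⁅x.2, y.2⁆)

/-- The 2-cochain `c((h,g),(h',g')) = (0, μ([h,h']))` attached to `μ : h → g`. -/
def crossedCocycle (μ : h →ₗ⁅ℂ⁆ g) (x y : h × g) : h × g :=
  (0, μ ⁅x.1, y.1⁆)

/-- for a crossed module `μ : h → g`, the cochain
`c((h,g),(h',g')) = (0, μ[h,h'])` is a 2-cocycle on `h ⋊ g` with adjoint values. -/
theorem crossedCocycle_is_two_cocycle (μ : h →ₗ⁅ℂ⁆ g)
    (hder : ∀ (x : g) (a b : h), ⁅x, ⁅a, b⁆⁆ = ⁅⁅x, a⁆, b⁆ + ⁅a, ⁅x, b⁆⁆)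
    (hcm1 : ∀ (x : g) (a : h), μ ⁅x, a⁆ = ⁅x, μ a⁆)
    (hcm2 : ∀ a b : h, ⁅μ a, b⁆ = ⁅a, b⁆) :
    ∀ x y z : h × g,
      crossedCocycle μ (semidirectBracket x y) z +
          crossedCocycle μ (semidirectBracket y z) x +
          crossedCocycle μ (semidirectBracket z x) y =
        semidirectBracket x (crossedCocycle μ y z) +
          semidirectBracket y (crossedCocycle μ z x) +
          semidirectBracket z (crossedCocycle μ x y) := by
  rintro ⟨a, p⟩ ⟨b, q⟩ ⟨c, r⟩
  simp only [crossedCocycle, semidirectBracket, Prod.mk_add_mk, Prod.mk.injEq]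
  constructor
  · simp only [lie_zero, hcm2, zero_sub]
    have j := lie_jacobi a b c
    rw [(lie_skew ⁅b, c⁆ a).symm, (lie_skew ⁅c, a⁆ b).symm, (lie_skew ⁅a, b⁆ c).symm]
    simp only [neg_neg]
    simpa using j.symm
  · simp only [zero_lie, lie_zero, sub_zero, map_sub, map_add, ← hcm1, hder]
    rw [(lie_skew b ⁅p, c⁆).symm, (lie_skew c ⁅q, a⁆).symm, (lie_skew a ⁅r, b⁆).symm]
    simp only [sub_lie, map_sub, map_add, map_neg]
    abel

end
end

section
/- If μ: h → g is a crossed module of Lie algebras with μ([h,h]) ≠ 0, then the 2-cocycle c((h,g),(h',g')) = (0, μ([h,h'])) on h⋊g is not a coboundary; in particular H^2(h⋊g, h⋊g) ≠ 0. -/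
section

variable {h g : Type*} [LieRing h] [LieAlgebra ℂ h] [LieRing g] [LieAlgebra ℂ g]
  [LieRingModule g h] [LieModule ℂ g h]

/-- if `μ : h → g` is a crossed module with `μ([h,h]) ≠ 0`, the
2-cocycle `c` is not a coboundary; in particular `H²(h ⋊ g, h ⋊ g) ≠ 0`. -/
theorem crossedCocycle_not_coboundary (μ : h →ₗ⁅ℂ⁆ g)
    (hder : ∀ (x : g) (a b : h), ⁅x, ⁅a, b⁆⁆ = ⁅⁅x, a⁆, b⁆ + ⁅a, ⁅x, b⁆⁆)
    (hcm1 : ∀ (x : g) (a : h), μ ⁅x, a⁆ = ⁅x, μ a⁆)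
    (hcm2 : ∀ a b : h, ⁅μ a, b⁆ = ⁅a, b⁆)
    (hne : ∃ a b : h, μ ⁅a, b⁆ ≠ 0) :
    ¬ ∃ α : (h × g) →ₗ[ℂ] (h × g), ∀ x y : h × g,
      crossedCocycle μ x y =
        semidirectBracket x (α y) - semidirectBracket y (α x) - α (semidirectBracket x y) := by
  rintro ⟨α, hα⟩
  obtain ⟨a, b, hab⟩ := hne
  have H := congrArg Prod.snd (hα (a, 0) (b, 0))
  simp [crossedCocycle, semidirectBracket] at H
  exact hab (by rw [LieHom.map_lie]; simpa [show α (0, 0) = 0 from map_zero α] using H)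

end
end

section
/- If the map μ in a crossed module μ: h → g is an isomorphism of Lie algebras, then the deformed Lie algebra (h⊕g, [·,·]_t) with bracket [(h,g),(h',g')]_t = (g·h'-g'·h, [g,g']+tμ([h,h'])) is isomorphic (for t ≠ 0) to the direct product Lie algebra h⊕g; explicitly, the map id_h + μ is an isomorphism from the deformed algebra of the identity crossed module to the deformed algebra of μ. -/
section

variable {h g : Type*} [LieRing h] [LieAlgebra ℂ h] [LieRing g] [LieAlgebra ℂ g]
  [LieRingModule g h] [LieModule ℂ g h]

/-- The deformed bracket `[(h,g),(h',g')]_t = (g·h' - g'·h, [g,g'] + t μ[h,h'])`. -/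
def deformedBracket (μ : h →ₗ⁅ℂ⁆ g) (t : ℂ) (x y : h × g) : h × g :=
  (⁅x.2, y.1⁆ - ⁅y.2, x.1⁆, ⁅x.2, y.2⁆ + t • μ ⁅x.1, y.1⁆)

/-- The deformed bracket of the identity crossed module `id : h → h`
(`h` acting on itself by the adjoint action). -/
def deformedBracketId (t : ℂ) (x y : h × h) : h × h :=
  (⁅x.2, y.1⁆ - ⁅y.2, x.1⁆, ⁅x.2, y.2⁆ + t • ⁅x.1, y.1⁆)

/-- The direct product bracket on `h ⊕ g`. -/
def directBracket (x y : h × g) : h × g :=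
  (⁅x.1, y.1⁆, ⁅x.2, y.2⁆)

/-- if `μ` is an isomorphism of Lie algebras, the deformed Lie
algebra `(h ⊕ g, [·,·]_t)` with `t ≠ 0` is isomorphic to the direct product
Lie algebra `h ⊕ g`; explicitly, `id_h + μ` is an isomorphism from the deformed
algebra of the identity crossed module to the deformed algebra of `μ`. -/
theorem deformed_iso_direct_of_mu_iso (μ : h →ₗ⁅ℂ⁆ g)
    (hder : ∀ (x : g) (a b : h), ⁅x, ⁅a, b⁆⁆ = ⁅⁅x, a⁆, b⁆ + ⁅a, ⁅x, b⁆⁆)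
    (hcm1 : ∀ (x : g) (a : h), μ ⁅x, a⁆ = ⁅x, μ a⁆)
    (hcm2 : ∀ a b : h, ⁅μ a, b⁆ = ⁅a, b⁆)
    (hbij : Function.Bijective μ) (t : ℂ) (ht : t ≠ 0) :
    (∃ Ψ : (h × g) ≃ₗ[ℂ] (h × g),
        ∀ x y : h × g, Ψ (deformedBracket μ t x y) = directBracket (Ψ x) (Ψ y)) ∧
    (Function.Bijective (fun p : h × h => ((p.1, μ p.2) : h × g)) ∧
      ∀ x y : h × h,
        ((deformedBracketId t x y).1, μ (deformedBracketId t x y).2) =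
          deformedBracket μ t (x.1, μ x.2) (y.1, μ y.2)) := by
  obtain ⟨s, hs⟩ := IsAlgClosed.exists_pow_nat_eq t (n := 2) (by norm_num)
  have hs0 : s ≠ 0 := by
    intro h0; apply ht; rw [← hs, h0]; ring
  set e := LinearEquiv.ofBijective μ.toLinearMap hbij with he
  have hec : ∀ a : h, e a = μ a := fun a => rfl
  have hes : ∀ a : h, e.symm (μ a) = a := fun a => by
    rw [← hec]; exact e.symm_apply_apply a
  have hse : ∀ x : g, μ (e.symm x) = x := fun x => by
    rw [← hec]; exact e.apply_symm_apply x
  have key1 : ∀ (x : g) (b : h), ⁅e.symm x, b⁆ = ⁅x, b⁆ := fun x b => by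
    rw [← hcm2 (e.symm x) b, hse]
  have key2 : ∀ x y : g, e.symm ⁅x, y⁆ = ⁅e.symm x, e.symm y⁆ := fun x y => by
    apply hbij.1
    rw [hse, μ.map_lie, hse, hse]
  constructor
  · refine ⟨{ toFun := fun p => (s • p.1 + e.symm p.2, p.2 - s • μ p.1)
              map_add' := ?_
              map_smul' := ?_
              invFun := fun p => ((2 * s)⁻¹ • (p.1 - e.symm p.2), (2:ℂ)⁻¹ • (μ p.1 + p.2))
              left_inv := ?_
              right_inv := ?_ }, ?_⟩
    · intro p q
      simp only [Prod.fst_add, Prod.snd_add, map_add, smul_add, Prod.mk_add_mk, Prod.mk.injEq, μ.map_add]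
      constructor <;> abel
    · intro c p
      simp only [Prod.smul_fst, Prod.smul_snd, map_smul, RingHom.id_apply, Prod.smul_mk,
        smul_sub, smul_add, Prod.mk.injEq, μ.map_smul]
      constructor <;> rw [smul_comm]
    · rintro ⟨a, x⟩
      simp only [map_sub, map_smul, map_add, μ.map_add, μ.map_smul, map_sub, hes, hse, Prod.mk.injEq]
      refine ⟨?_, ?_⟩
      · match_scalars <;> field_simp <;> ring
      · match_scalars <;> field_simp <;> ring
    · rintro ⟨u, v⟩
      simp only [map_sub, map_smul, map_add, μ.map_add, μ.map_smul, map_sub, hes, hse, Prod.mk.injEq]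
      refine ⟨?_, ?_⟩
      · match_scalars <;> field_simp <;> ring
      · match_scalars <;> field_simp <;> ring
    · rintro ⟨a, x⟩ ⟨b, y⟩
      simp only [deformedBracket, directBracket, LinearEquiv.coe_mk, LinearMap.coe_mk,
        AddHom.coe_mk, Prod.mk.injEq, map_add, map_sub, map_smul, μ.map_lie, hes, key2]
      refine ⟨?_, ?_⟩
      · rw [add_lie, lie_add, lie_add, lie_smul, lie_smul, smul_lie, smul_lie, key1 x b,
          ← lie_skew a (e.symm y), key1 y a, ← hs]
        module
      · rw [sub_lie, lie_sub, lie_sub, lie_smul, lie_smul, smul_lie, smul_lie,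
          hcm1, hcm1, ← lie_skew y (μ a), ← hs]
        module
  · constructor
    · constructor
      · rintro ⟨a, x⟩ ⟨b, y⟩ hab
        simp only [Prod.mk.injEq] at hab
        exact Prod.ext hab.1 (hbij.1 hab.2)
      · rintro ⟨a, x⟩
        exact ⟨(a, e.symm x), by simp [hse]⟩
    · rintro ⟨a, x⟩ ⟨b, y⟩
      simp [deformedBracketId, deformedBracket, map_add, map_smul, μ.map_lie, hcm2]

end
end
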